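/- Let l, k > 0 and d ≥ 0 with l² > d² + k². Let v_ε = (1/2)·k·((d+l)² + k²)/(k² + d² + l²) and let h(v_ε) = 1 + I·(I − √(G·H))/(2k²l²), where G = (d+l)² + k², H = (d−l)² + k², I = l² − d² − k². Then 2·arctan(√(h(v_ε))) = arctan(2kl/I). (Interpretation: √(h(v_ε)) = b/a for the unique minimal-eccentricity ellipse E_I inscribed in the parallelogram D with vertices (0,0), (l,0), (d,k), (l+d,k); θ = arctan(b/a) is the acute angle between an equal conjugate diameter of E_I and its major axis, so 2θ is the smallest nonnegative angle between the equal conjugate diameters of E_I, while arctan(2kl/I) is the smallest nonnegative angle between the diagonals of D. Thus the smallest nonnegative angle between equal conjugate diameters of E_I equals the smallest nonnegative angle between the diagonals of D.) -/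

import Mathlib

set_option maxHeartbeats 1000000 in
theorem stmt_9 (l k d : ℝ) (hl : 0 < l) (hk : 0 < k) (hd : 0 ≤ d)
    (hlt : d ^ 2 + k ^ 2 < l ^ 2)
    (G H I hvε : ℝ)
    (hG : G = (d + l) ^ 2 + k ^ 2) (hH : H = (d - l) ^ 2 + k ^ 2)
    (hI : I = l ^ 2 - d ^ 2 - k ^ 2)
    (hhvε : hvε = 1 + I * (I - Real.sqrt (G * H)) / (2 * k ^ 2 * l ^ 2)) :
    2 * Real.arctan (Real.sqrt hvε) = Real.arctan (2 * k * l / I) := by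
  have hIpos : 0 < I := by rw [hI]; linarith
  set S := Real.sqrt (G * H) with hS
  have hGH : G * H = I ^ 2 + 4 * k ^ 2 * l ^ 2 := by
    subst hG hH hI; ring
  have hGHnn : 0 ≤ G * H := by nlinarith [sq_nonneg k, sq_nonneg l, sq_nonneg I]
  have hS2 : S ^ 2 = I ^ 2 + 4 * k ^ 2 * l ^ 2 := by
    rw [hS, Real.sq_sqrt hGHnn, hGH]
  have hSnn : 0 ≤ S := Real.sqrt_nonneg _
  have hSgt : I < S := by nlinarith [mul_pos hk hl]
  -- √hvε = (S - I) / (2 k l)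
  have hkl : 0 < 2 * k * l := by positivity
  have ht : Real.sqrt hvε = (S - I) / (2 * k * l) := by
    rw [hhvε]
    rw [show (1 : ℝ) + I * (I - S) / (2 * k ^ 2 * l ^ 2) = ((S - I) / (2 * k * l)) ^ 2 by
      field_simp
      nlinarith [hS2]]
    exact Real.sqrt_sq (le_of_lt (div_pos (by linarith) hkl))
  rw [ht]
  set t := (S - I) / (2 * k * l) with htdef
  have htpos : 0 < t := div_pos (by linarith) hkl
  have ht2lt : t * t < 1 := by
    rw [htdef, div_mul_div_comm, div_lt_one (by positivity)]
    nlinarith [hSgt, hSnn, hIpos, hS2]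
  have := Real.arctan_add ht2lt
  rw [two_mul, this]
  congr 1
  have hSI : (0:ℝ) < S - I := by linarith
  have e1 : t + t = (S - I) / (k * l) := by rw [htdef]; ring
  have e2 : 1 - t * t = I * (S - I) / (2 * k ^ 2 * l ^ 2) := by
    rw [htdef]
    field_simp
    nlinarith [hS2]
  rw [e1, e2]
  have hkne : k ≠ 0 := ne_of_gt hk
  have hlne : l ≠ 0 := ne_of_gt hl
  have hIne : I ≠ 0 := ne_of_gt hIpos
  have hSIne : S - I ≠ 0 := ne_of_gt hSI
  field_simp
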